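/- arXiv:2109.06653 — 2 statements merged into one kernel-verified Lean document; each statement's English description precedes it below -/
import Mathlib

section
/- Positivity of filtered inner products (1D): let $\mathcal{H} = B\,\mathrm{diag}(\hat{\mathcal F})\,F$ with filter coefficients $\hat{\mathcal F}_j \geq 0$. Then for any $Q \in \mathbb{R}^{N+1}$, the discrete inner product $\sum_{i=0}^N w_i Q_i (\mathcal{H} Q)_i \geq 0$. Equivalently, the matrix $W\mathcal{H}$ with $W = \mathrm{diag}(w_i)$ is positive semi-definite. -/
open Finset Matrix

/-- The discrete Gauss–Lobatto inner product with weights `w` and nodes `ξ`. -/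
noncomputable def discIP {N : ℕ} (w ξ : Fin (N + 1) → ℝ) (f g : ℝ → ℝ) : ℝ :=
  ∑ k : Fin (N + 1), w k * f (ξ k) * g (ξ k)

/-- Forward (nodal → modal) matrix `F_ij = ⟨l_j, L_i⟩_N / ‖L_i‖_N²`. -/
noncomputable def forwardMat {N : ℕ} (w ξ : Fin (N + 1) → ℝ)
    (l L : Fin (N + 1) → ℝ → ℝ) : Matrix (Fin (N + 1)) (Fin (N + 1)) ℝ :=
  Matrix.of fun i j => discIP w ξ (l j) (L i) / discIP w ξ (L i) (L i)

/-- Backward (modal → nodal) matrix `B_ij = ⟨L_j, l_i⟩_N / w_i`. -/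
noncomputable def backwardMat {N : ℕ} (w ξ : Fin (N + 1) → ℝ)
    (l L : Fin (N + 1) → ℝ → ℝ) : Matrix (Fin (N + 1)) (Fin (N + 1)) ℝ :=
  Matrix.of fun i j => discIP w ξ (L j) (l i) / w i

lemma discIP_comm {N : ℕ} (w ξ : Fin (N + 1) → ℝ) (f g : ℝ → ℝ) :
    discIP w ξ f g = discIP w ξ g f := by
  unfold discIP; exact Finset.sum_congr rfl fun k _ => by ring

/-- positivity of filtered inner products in 1D.  With
`H = B diag(F̂) F` and nonnegative filter coefficients `F̂_j ≥ 0`, the discrete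
inner product `∑ w_i Q_i (H Q)_i` is nonnegative for every `Q`; equivalently,
`W * H` with `W = diag(w)` is positive semi-definite. -/
theorem filtered_inner_product_nonneg {N : ℕ} (hN : 1 ≤ N)
    (ξ w : Fin (N + 1) → ℝ) (l L : Fin (N + 1) → ℝ → ℝ)
    (hξmono : StrictMono ξ) (hξmem : ∀ i, ξ i ∈ Set.Icc (-1 : ℝ) 1)
    (hw : ∀ i, 0 < w i)
    (hlag : ∀ i j, l j (ξ i) = if i = j then 1 else 0)
    (horth : ∀ n m, discIP w ξ (L n) (L m) =
      if n = m then discIP w ξ (L n) (L n) else 0)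
    (hnorm : ∀ n, 0 < discIP w ξ (L n) (L n))
    (Fhat : Fin (N + 1) → ℝ) (hFhat : ∀ j, 0 ≤ Fhat j) :
    (∀ Q : Fin (N + 1) → ℝ,
      0 ≤ ∑ i : Fin (N + 1), w i * Q i *
        ((backwardMat w ξ l L * Matrix.diagonal Fhat * forwardMat w ξ l L).mulVec
          Q i)) ∧
    (Matrix.diagonal w *
      (backwardMat w ξ l L * Matrix.diagonal Fhat * forwardMat w ξ l L)).PosSemidef := by
  set A := forwardMat w ξ l L with hA
  set B := backwardMat w ξ l L with hB
  have key : ∀ i j, w i * B i j = discIP w ξ (L j) (L j) * A j i := by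
    intro i j
    simp only [hA, hB, forwardMat, backwardMat, Matrix.of_apply]
    rw [discIP_comm w ξ (l i) (L j)]
    field_simp [(hw i).ne', (hnorm j).ne']
  have hmat : Matrix.diagonal w * (B * Matrix.diagonal Fhat * A)
      = Aᴴ * Matrix.diagonal (fun j => discIP w ξ (L j) (L j) * Fhat j) * A := by
    ext i k
    simp only [Matrix.mul_apply, Matrix.diagonal_apply, Matrix.conjTranspose_apply,
      star_trivial]
    simp only [Finset.sum_ite_eq, Finset.sum_ite_eq', Finset.mem_univ, if_true,
      mul_ite, ite_mul, mul_zero, zero_mul]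
    rw [Finset.mul_sum]
    refine Finset.sum_congr rfl fun j _ => ?_
    linear_combination Fhat j * A j k * key i j
  have hpsd : (Matrix.diagonal w * (B * Matrix.diagonal Fhat * A)).PosSemidef := by
    rw [hmat]
    exact (Matrix.posSemidef_diagonal_iff.mpr fun j =>
      mul_nonneg (hnorm j).le (hFhat j)).conjTranspose_mul_mul_same A
  refine ⟨fun Q => ?_, hpsd⟩
  have h := hpsd.dotProduct_mulVec_nonneg Q
  simp only [star_trivial] at h
  calc (0:ℝ) ≤ Q ⬝ᵥ (Matrix.diagonal w * (B * Matrix.diagonal Fhat * A)) *ᵥ Q := h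
    _ = ∑ i, w i * Q i * ((B * Matrix.diagonal Fhat * A).mulVec Q i) := by
        simp only [dotProduct, Matrix.mulVec, Matrix.mul_apply, Matrix.diagonal_apply,
          dotProduct]
        refine Finset.sum_congr rfl fun i _ => ?_
        simp only [Finset.sum_ite_eq, Finset.sum_ite_eq', Finset.mem_univ, if_true,
          mul_ite, ite_mul, mul_zero, zero_mul, mul_assoc]
        rw [← Finset.mul_sum]
        ring
end

section
/- Let $\mathcal{J} > 0$ be a positive function (diagonal positive matrix in the discrete setting), $\alpha \geq 0$ a nonnegative function, $C$ a symmetric positive semi-definite matrix, and $\mathcal{F}\star$ a filtering operator satisfying $\langle v, \mathcal{F}\star v\rangle_N \geq 0$ componentwise for all $v$. Then the filtered artificial flux $F_a^{\mathcal F} = \sqrt{\alpha/\mathcal{J}}\, C\, \mathcal{F}\star(\sqrt{\mathcal{J}\alpha}\, G)$ satisfies $\langle \mathcal{J} G, F_a^{\mathcal F}\rangle_N = \langle \sqrt{\mathcal{J}\alpha}\,G,\; C\,\mathcal{F}\star(\sqrt{\mathcal{J}\alpha}\,G)\rangle_N \geq 0$, provided $C$ commutes with $\mathcal{F}\star$ in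 the sense that $\langle u, C\,\mathcal{F}\star u\rangle_N \geq 0$ for all $u$ (which holds when $C$ is constant, symmetric PSD, and $\mathcal{F}\star$ acts componentwise with $\langle u, \mathcal{F}\star u\rangle_N \geq 0$ and symmetric weighted form). -/
open Matrix Finset

/-- entropy stability of the SVV-filtered artificial flux
`F_a^F = √(α/J) C F⋆(√(Jα) G)`.  Here the nodal filter `H` acts componentwise,
the weighted filter matrix `diag(w) * H` is symmetric positive semi-definite,
and `C` is a constant symmetric positive semi-definite matrix.  Then
`⟨J G, F_a^F⟩_N = ⟨√(Jα) G, C F⋆(√(Jα) G)⟩_N ≥ 0`. -/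
theorem filtered_artificial_flux_dissipation_nonneg {n m : ℕ}
    (w : Fin n → ℝ) (hw : ∀ i, 0 < w i)
    (H : Matrix (Fin n) (Fin n) ℝ)
    (hH : (Matrix.diagonal w * H).PosSemidef)
    (C : Matrix (Fin m) (Fin m) ℝ) (hC : C.PosSemidef)
    (J α : Fin n → ℝ) (hJ : ∀ i, 0 < J i) (hα : ∀ i, 0 ≤ α i)
    (G : Fin n → Fin m → ℝ) :
    let filt : Fin n → Fin m → ℝ := fun i c =>
      ∑ k : Fin n, H i k * (Real.sqrt (J k * α k) * G k c)
    let Fa : Fin n → Fin m → ℝ := fun i =>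
      Real.sqrt (α i / J i) • C.mulVec (filt i)
    (∑ i : Fin n, w i * ((J i • G i) ⬝ᵥ Fa i)) =
      (∑ i : Fin n, w i *
        ((Real.sqrt (J i * α i) • G i) ⬝ᵥ C.mulVec (filt i))) ∧
    0 ≤ ∑ i : Fin n, w i * ((J i • G i) ⬝ᵥ Fa i) := by
  intro filt Fa
  have key : ∀ i, J i * Real.sqrt (α i / J i) = Real.sqrt (J i * α i) := by
    intro i
    have hne : J i ≠ 0 := (hJ i).ne'
    rw [show J i * α i = (J i)^2 * (α i / J i) by field_simp,
      Real.sqrt_mul (sq_nonneg _), Real.sqrt_sq (hJ i).le]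
  have heq : (∑ i : Fin n, w i * ((J i • G i) ⬝ᵥ Fa i)) =
      (∑ i : Fin n, w i *
        ((Real.sqrt (J i * α i) • G i) ⬝ᵥ C.mulVec (filt i))) := by
    refine Finset.sum_congr rfl fun i _ => ?_
    show w i * ((J i • G i) ⬝ᵥ (Real.sqrt (α i / J i) • C.mulVec (filt i))) = _
    simp only [smul_dotProduct, dotProduct_smul, smul_eq_mul]
    rw [← mul_assoc (Real.sqrt (α i / J i)), mul_comm (Real.sqrt (α i / J i)) (J i), key i]
  refine ⟨heq, ?_⟩
  rw [heq]
  obtain ⟨A, hA⟩ : ∃ A : Matrix (Fin m) (Fin m) ℝ, C = Aᴴ * A := by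
    open MatrixOrder Matrix.Norms.L2Operator in
    obtain ⟨B, hB⟩ := CStarAlgebra.nonneg_iff_eq_star_mul_self.mp hC.nonneg
    exact ⟨B, hB⟩
  set u : Fin n → Fin m → ℝ := fun k c => Real.sqrt (J k * α k) * G k c with hu
  set y : Fin m → Fin n → ℝ := fun e i => (A *ᵥ u i) e with hy
  have hfilt : ∀ i c, filt i c = ∑ k, H i k * u k c := fun i c => rfl
  have hAfilt : ∀ i e, (A *ᵥ (filt i)) e = ∑ k, H i k * y e k := by
    intro i e
    simp only [Matrix.mulVec, dotProduct, hfilt, hy, Finset.mul_sum]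
    rw [Finset.sum_comm]
    exact Finset.sum_congr rfl fun k _ => Finset.sum_congr rfl fun c _ => by ring
  have hterm : ∀ i, (Real.sqrt (J i * α i) • G i) ⬝ᵥ C.mulVec (filt i)
      = ∑ e, y e i * (∑ k, H i k * y e k) := by
    intro i
    have h1 : (Real.sqrt (J i * α i) • G i) = u i := by
      funext c; simp [hu, smul_eq_mul]
    rw [h1, hA]
    have h2 : (Aᴴ * A) *ᵥ (filt i) = Aᴴ *ᵥ (A *ᵥ filt i) := by
      rw [← Matrix.mulVec_mulVec]
    rw [h2, Matrix.dotProduct_mulVec]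
    have h3 : Aᴴ = Aᵀ := by
      ext a b; simp [Matrix.conjTranspose_apply]
    rw [h3, ← Matrix.mulVec_transpose, Matrix.transpose_transpose]
    simp only [dotProduct, hy]
    exact Finset.sum_congr rfl fun e _ => by rw [hAfilt i e]
  calc (∑ i : Fin n, w i * ((Real.sqrt (J i * α i) • G i) ⬝ᵥ C.mulVec (filt i)))
      = ∑ i, ∑ e, w i * (y e i * (∑ k, H i k * y e k)) := by
        refine Finset.sum_congr rfl fun i _ => ?_
        rw [hterm i, Finset.mul_sum]
    _ = ∑ e, ∑ i, w i * (y e i * (∑ k, H i k * y e k)) := Finset.sum_comm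
    _ ≥ 0 := by
        refine Finset.sum_nonneg fun e _ => ?_
        have h := hH.dotProduct_mulVec_nonneg (y e)
        have hstar : star (y e) = y e := by funext i; simp
        rw [hstar] at h
        convert h using 1
        simp only [dotProduct, Matrix.mulVec, Matrix.mul_apply,
          Matrix.diagonal_apply, ite_mul, zero_mul, Finset.sum_ite_eq,
          Finset.mem_univ, if_true, Finset.mul_sum]
        refine Finset.sum_congr rfl fun i _ => ?_
        refine Finset.sum_congr rfl fun k _ => ?_
        ring
end
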